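/- Let V be a finite-dimensional vector space over a field, and let φ, ψ : Grass(V) → ℝ be functions on the set of vector subspaces of V such that: φ ≥ 0 and φ(0) = 0; φ and ψ are non-decreasing for inclusion; φ is submodular (φ(U+W) + φ(U∩W) ≤ φ(U) + φ(W)) and ψ is supermodular (ψ(U+W) + ψ(U∩W) ≥ ψ(U) + ψ(W)). Define q(x) = ψ(x)/φ(x) with the convention q(x) = 0 if ψ(x) = 0, and q(x) = sign(ψ(x))·∞ if φ(x) = 0 but ψ(x) ≠ 0. Then the supremum S = sup over subspaces x of q(x) is attained, and there is a unique subspace x₀ of maximal dimension with q(x₀) = S. -/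

import Mathlib

open Module

/-- Key lemma: the maximum of the ratio `ψ/φ` over subspaces of `u` is attained,
proved by strong induction on `finrank u`. -/
private lemma keyP {K V : Type*} [Field K] [AddCommGroup V] [Module K V] [FiniteDimensional K V]
    (φ ψ : Submodule K V → ℝ)
    (hφ_nonneg : ∀ W, 0 ≤ φ W) (hφ_bot : φ ⊥ = 0)
    (hφ_mono : ∀ U W : Submodule K V, U ≤ W → φ U ≤ φ W)
    (hψ_mono : ∀ U W : Submodule K V, U ≤ W → ψ U ≤ ψ W)
    (hφ_sub : ∀ U W : Submodule K V, φ (U ⊔ W) + φ (U ⊓ W) ≤ φ U + φ W)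
    (hψ_super : ∀ U W : Submodule K V, ψ U + ψ W ≤ ψ (U ⊔ W) + ψ (U ⊓ W))
    (H : ∀ x, φ x = 0 → ψ x ≤ 0) :
    ∀ n (u : Submodule K V), finrank K u ≤ n → 0 < φ u →
      ∃ z, z ≤ u ∧ 0 < φ z ∧ ∀ x ≤ u, ψ x * φ z ≤ ψ z * φ x := by
  intro n
  induction n with
  | zero =>
    intro u hun hφu
    have hbot : u = ⊥ := Submodule.finrank_eq_zero.mp (Nat.le_zero.mp hun)
    rw [hbot, hφ_bot] at hφu
    exact absurd hφu (lt_irrefl 0)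
  | succ n ih =>
    intro u hun hφu
    by_cases hu : ∀ x ≤ u, ψ x * φ u ≤ ψ u * φ x
    · exact ⟨u, le_rfl, hφu, hu⟩
    push_neg at hu
    obtain ⟨x₁, hx₁u, hx₁⟩ := hu
    have hφx₁ : 0 < φ x₁ := by
      rcases (hφ_nonneg x₁).lt_or_eq with h | h
      · exact h
      · exfalso
        have hψ := H x₁ h.symm
        rw [← h, mul_zero] at hx₁
        nlinarith [mul_nonneg (neg_nonneg.2 hψ) (hφ_nonneg u)]
    have hψx₁ : 0 < ψ x₁ := by
      by_contra h
      push_neg at h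
      have h1 : ψ x₁ ≤ ψ u := hψ_mono _ _ hx₁u
      have h2 : φ x₁ ≤ φ u := hφ_mono _ _ hx₁u
      nlinarith
    set c : ℝ := max (ψ u / φ u) 0 with hcdef
    have hc0 : 0 ≤ c := le_max_right _ _
    have hcu : ψ u ≤ c * φ u := by
      have h1 : ψ u / φ u ≤ c := le_max_left _ _
      rw [div_le_iff₀ hφu] at h1
      linarith
    have hcx₁ : c * φ x₁ < ψ x₁ := by
      rw [hcdef, max_mul_of_nonneg _ _ hφx₁.le]
      apply max_lt
      · rw [div_mul_eq_mul_div, div_lt_iff₀ hφu]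
        linarith
      · simpa using hψx₁
    set A : Set (Submodule K V) := {x | x ≤ u ∧ c * φ x < ψ x} with hA
    have hAu : u ∉ A := by
      intro h
      exact absurd h.2 (not_lt.mpr hcu)
    have hx₁A : x₁ ∈ A := ⟨hx₁u, hcx₁⟩
    set R : Set ℕ := (fun x : Submodule K V => finrank K x) '' A with hR
    have hRne : R.Nonempty := ⟨_, ⟨x₁, hx₁A, rfl⟩⟩
    have hRbdd : BddAbove R := by
      refine ⟨finrank K V, ?_⟩
      rintro k ⟨x, _, rfl⟩
      exact x.finrank_le
    obtain ⟨y, hyA, hyd⟩ := Nat.sSup_mem hRne hRbdd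
    have hmaxrank : ∀ x ∈ A, finrank K x ≤ finrank K y := by
      intro x hx
      exact (le_csSup hRbdd ⟨x, hx, rfl⟩).trans_eq hyd.symm
    have hyu : y ≤ u := hyA.1
    have hylt : y < u := lt_of_le_of_ne hyu (fun h => hAu (h ▸ hyA))
    have hrank : finrank K y ≤ n := by
      have := Submodule.finrank_lt_finrank_of_lt hylt
      omega
    have hψy : c * φ y < ψ y := hyA.2
    have hψy0 : 0 < ψ y := lt_of_le_of_lt (mul_nonneg hc0 (hφ_nonneg y)) hψy
    have hφy : 0 < φ y := by
      rcases (hφ_nonneg y).lt_or_eq with h | h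
      · exact h
      · exact absurd hψy0 (not_lt.mpr (H y h.symm))
    obtain ⟨z, hzy, hφz, hz⟩ := ih y hrank hφy
    refine ⟨z, hzy.trans hyu, hφz, ?_⟩
    intro x hxu
    by_contra hcon
    push_neg at hcon
    have hφx : 0 < φ x := by
      rcases (hφ_nonneg x).lt_or_eq with h | h
      · exact h
      · exfalso
        have hψx := H x h.symm
        rw [← h, mul_zero] at hcon
        nlinarith [mul_nonneg (neg_nonneg.2 hψx) hφz.le]
    have hzc : c * φ z < ψ z := by
      have h1 := hz y le_rfl
      nlinarith
    have hMx : φ (y ⊓ x) ≤ φ x := hφ_mono _ _ inf_le_right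
    have hzM : ψ (y ⊓ x) * φ z ≤ ψ z * φ (y ⊓ x) := hz _ inf_le_left
    have hsuper := hψ_super y x
    have hsub := hφ_sub y x
    -- the bracket inequality
    have k1 : (ψ z - c * φ z) * φ x < (ψ x - c * φ x) * φ z := by nlinarith
    have k2 : (ψ z - c * φ z) * φ (y ⊓ x) ≤ (ψ z - c * φ z) * φ x :=
      mul_le_mul_of_nonneg_left hMx (by linarith)
    have k3 : (ψ (y ⊓ x) - c * φ (y ⊓ x)) * φ z ≤ (ψ z - c * φ z) * φ (y ⊓ x) := by nlinarith
    have kbracket : ψ (y ⊓ x) - c * φ (y ⊓ x) < ψ x - c * φ x := by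
      have h := lt_of_le_of_lt (k3.trans k2) k1
      exact lt_of_mul_lt_mul_right h hφz.le
    have csub : c * (φ (y ⊔ x) + φ (y ⊓ x)) ≤ c * (φ y + φ x) :=
      mul_le_mul_of_nonneg_left hsub hc0
    have hJA : y ⊔ x ∈ A := by
      refine ⟨sup_le hyu hxu, ?_⟩
      nlinarith
    have hJrank : finrank K (y ⊔ x : Submodule K V) ≤ finrank K y := hmaxrank _ hJA
    have hyJ : y < y ⊔ x :=
      lt_of_le_of_ne le_sup_left
        (fun h => absurd (hz x (le_trans le_sup_right h.symm.le)) (not_le.mpr hcon))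
    have := Submodule.finrank_lt_finrank_of_lt hyJ
    omega

/-- Abstract finishing lemma: if the set `M` of maximizers is nonempty, closed under `⊔`,
consists of elements at which `q` attains its maximum, and contains every maximizer,
then there is a unique maximizer of maximal dimension. -/
private lemma finishP {K V : Type*} [Field K] [AddCommGroup V] [Module K V]
    [FiniteDimensional K V]
    (q : Submodule K V → EReal) (M : Set (Submodule K V)) (hne : M.Nonempty)
    (hsupc : ∀ a ∈ M, ∀ b ∈ M, a ⊔ b ∈ M)
    (hM : ∀ m ∈ M, ∀ x, q x ≤ q m)
    (hmax : ∀ x, (∀ y, q y ≤ q x) → x ∈ M) :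
    ∃! x₀ : Submodule K V,
      (∀ x, q x ≤ q x₀) ∧
      (∀ x, (∀ y, q y ≤ q x) → finrank K x ≤ finrank K x₀) := by
  set R : Set ℕ := (fun x : Submodule K V => finrank K x) '' M with hR
  have hRne : R.Nonempty := hne.image _
  have hRbdd : BddAbove R := by
    refine ⟨finrank K V, ?_⟩
    rintro k ⟨x, _, rfl⟩
    exact x.finrank_le
  obtain ⟨x₀, hx₀M, hx₀d⟩ := Nat.sSup_mem hRne hRbdd
  have hgreatest : ∀ y ∈ M, y ≤ x₀ := by
    intro y hy
    have hJ : y ⊔ x₀ ∈ M := hsupc y hy x₀ hx₀M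
    have h1 : finrank K (y ⊔ x₀ : Submodule K V) ≤ finrank K x₀ :=
      (le_csSup hRbdd ⟨_, hJ, rfl⟩).trans_eq hx₀d.symm
    have h2 : x₀ = y ⊔ x₀ := Submodule.eq_of_le_of_finrank_le le_sup_right h1
    exact le_sup_left.trans h2.ge
  have hx₀max : ∀ x, q x ≤ q x₀ := hM x₀ hx₀M
  refine ⟨x₀, ⟨hx₀max, ?_⟩, ?_⟩
  · intro x hx
    exact Submodule.finrank_mono (hgreatest x (hmax x hx))
  · rintro x₁ ⟨h1, h2⟩
    have hx₁M : x₁ ∈ M := hmax x₁ h1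
    have hle : x₁ ≤ x₀ := hgreatest x₁ hx₁M
    have hge : finrank K x₀ ≤ finrank K x₁ := h2 x₀ hx₀max
    exact Submodule.eq_of_le_of_finrank_le hle hge

/-- The submodularity lemma: if `φ ≥ 0`, `φ ⊥ = 0`, `φ` and `ψ` are non-decreasing for
inclusion, `φ` is submodular and `ψ` is supermodular on the lattice of subspaces of a
finite-dimensional vector space `V`, then the supremum of `q = ψ/φ` (with the stated
conventions) is attained, and there is a unique subspace of maximal dimension attaining it. -/
theorem submodularity_lemma
    {K V : Type*} [Field K] [AddCommGroup V] [Module K V] [FiniteDimensional K V]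
    (φ ψ : Submodule K V → ℝ)
    (hφ_nonneg : ∀ W, 0 ≤ φ W) (hφ_bot : φ ⊥ = 0)
    (hφ_mono : ∀ U W : Submodule K V, U ≤ W → φ U ≤ φ W)
    (hψ_mono : ∀ U W : Submodule K V, U ≤ W → ψ U ≤ ψ W)
    (hφ_sub : ∀ U W : Submodule K V, φ (U ⊔ W) + φ (U ⊓ W) ≤ φ U + φ W)
    (hψ_super : ∀ U W : Submodule K V, ψ U + ψ W ≤ ψ (U ⊔ W) + ψ (U ⊓ W))
    (q : Submodule K V → EReal)
    (hq : ∀ W, q W = if ψ W = 0 then 0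
      else if φ W = 0 then (if 0 < ψ W then (⊤ : EReal) else (⊥ : EReal))
      else ((ψ W / φ W : ℝ) : EReal)) :
    ∃! x₀ : Submodule K V,
      (∀ x, q x ≤ q x₀) ∧
      (∀ x, (∀ y, q y ≤ q x) → Module.finrank K x ≤ Module.finrank K x₀) := by
  classical
  by_cases hC1 : ∃ x, φ x = 0 ∧ 0 < ψ x
  · -- Case 1 : the supremum is `⊤`
    obtain ⟨w, hw0, hwψ⟩ := hC1
    set M : Set (Submodule K V) := {x | φ x = 0 ∧ 0 < ψ x} with hMdef
    have hqM : ∀ m ∈ M, q m = ⊤ := by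
      rintro m ⟨h0, hψm⟩
      rw [hq, if_neg (ne_of_gt hψm), if_pos h0, if_pos hψm]
    refine finishP q M ⟨w, hw0, hwψ⟩ ?_ ?_ ?_
    · rintro a ⟨ha0, haψ⟩ b ⟨hb0, hbψ⟩
      constructor
      · have h1 := hφ_sub a b
        have h2 := hφ_nonneg (a ⊔ b)
        have h3 := hφ_nonneg (a ⊓ b)
        linarith
      · exact lt_of_lt_of_le haψ (hψ_mono a _ le_sup_left)
    · intro m hm x
      rw [hqM m hm]
      exact le_top
    · intro x hx
      have hxtop : q x = ⊤ :=
        top_le_iff.mp (le_trans (le_of_eq (hqM w ⟨hw0, hwψ⟩).symm) (hx w))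
      rw [hq] at hxtop
      split_ifs at hxtop with h1 h2 h3
      all_goals first
        | exact ⟨h2, h3⟩
        | exact absurd hxtop (by simp)
  · push_neg at hC1
    have H : ∀ x, φ x = 0 → ψ x ≤ 0 := hC1
    by_cases hpos : ∃ x, 0 < ψ x
    · -- Case 2 : positive maximum, attained via keyP
      obtain ⟨xp, hxp⟩ := hpos
      have hφxp : 0 < φ xp := by
        rcases (hφ_nonneg xp).lt_or_eq with h | h
        · exact h
        · exact absurd hxp (not_lt.mpr (H xp h.symm))
      have hφtop : 0 < φ (⊤ : Submodule K V) :=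
        lt_of_lt_of_le hφxp (hφ_mono _ _ le_top)
      obtain ⟨z, _, hφz, hz'⟩ := keyP φ ψ hφ_nonneg hφ_bot hφ_mono hψ_mono hφ_sub hψ_super H
        (finrank K (⊤ : Submodule K V)) ⊤ le_rfl hφtop
      have hz : ∀ x : Submodule K V, ψ x * φ z ≤ ψ z * φ x := fun x => hz' x le_top
      have hψz : 0 < ψ z := by
        have h1 := hz xp
        nlinarith
      set M : Set (Submodule K V) := {x | 0 < φ x ∧ ψ x * φ z = ψ z * φ x} with hMdef
      have hzM : z ∈ M := ⟨hφz, by ring⟩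
      have hcpos : 0 < ψ z / φ z := div_pos hψz hφz
      have hqM : ∀ m ∈ M, q m = ((ψ z / φ z : ℝ) : EReal) := by
        rintro m ⟨hφm, hm⟩
        have hψm : 0 < ψ m := by nlinarith
        rw [hq, if_neg (ne_of_gt hψm), if_neg (ne_of_gt hφm)]
        congr 1
        rw [div_eq_div_iff hφm.ne' hφz.ne']
        linarith [hm]
      have hqle : ∀ x, q x ≤ ((ψ z / φ z : ℝ) : EReal) := by
        intro x
        rw [hq]
        split_ifs with h1 h2 h3
        · exact_mod_cast hcpos.le
        · exact absurd h3 (not_lt.mpr (H x h2))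
        · exact bot_le
        · have hφx : 0 < φ x := (hφ_nonneg x).lt_of_ne (Ne.symm h2)
          have : ψ x / φ x ≤ ψ z / φ z := by
            rw [div_le_div_iff₀ hφx hφz]
            exact hz x
          exact_mod_cast this
      refine finishP q M ⟨z, hzM⟩ ?_ (fun m hm x => le_trans (hqle x) (le_of_eq (hqM m hm).symm)) ?_
      · rintro a ⟨hφa, ha⟩ b ⟨hφb, hb⟩
        refine ⟨lt_of_lt_of_le hφa (hφ_mono a _ le_sup_left), ?_⟩
        refine le_antisymm (hz _) ?_
        have e1 : (ψ a + ψ b) * φ z ≤ (ψ (a ⊔ b) + ψ (a ⊓ b)) * φ z :=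
          mul_le_mul_of_nonneg_right (hψ_super a b) hφz.le
        have e2 : ψ (a ⊓ b) * φ z ≤ ψ z * φ (a ⊓ b) := hz _
        have e3 : ψ z * (φ (a ⊔ b) + φ (a ⊓ b)) ≤ ψ z * (φ a + φ b) :=
          mul_le_mul_of_nonneg_left (hφ_sub a b) hψz.le
        nlinarith
      · intro x hx
        have heq : q x = ((ψ z / φ z : ℝ) : EReal) :=
          le_antisymm (hqle x) (le_trans (le_of_eq (hqM z hzM).symm) (hx z))
        rw [hq] at heq
        split_ifs at heq with h1 h2 h3
        · exfalso
          rw [show (0 : EReal) = ((0 : ℝ) : EReal) from rfl, EReal.coe_eq_coe_iff] at heq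
          exact absurd hcpos (by rw [← heq]; simp)
        · exact absurd h3 (not_lt.mpr (H x h2))
        · exact absurd heq (by simp)
        · have hφx : 0 < φ x := (hφ_nonneg x).lt_of_ne (Ne.symm h2)
          rw [EReal.coe_eq_coe_iff, div_eq_div_iff hφx.ne' hφz.ne'] at heq
          exact ⟨hφx, by linarith⟩
    · push_neg at hpos
      by_cases h0 : ∃ x, ψ x = 0
      · -- Case 3 : the maximum is `0`
        obtain ⟨w, hw⟩ := h0
        set M : Set (Submodule K V) := {x | ψ x = 0} with hMdef
        have hqM : ∀ m ∈ M, q m = 0 := fun m hm => by rw [hq, if_pos (show ψ m = 0 from hm)]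
        have hqle : ∀ x, q x ≤ 0 := by
          intro x
          rw [hq]
          split_ifs with h1 h2 h3
          · exact le_refl 0
          · exact absurd h3 (not_lt.mpr (hpos x))
          · exact bot_le
          · rw [show (0 : EReal) = ((0 : ℝ) : EReal) from rfl]
            exact EReal.coe_le_coe_iff.mpr
              (div_nonpos_of_nonpos_of_nonneg (hpos x) (hφ_nonneg x))
        refine finishP q M ⟨w, hw⟩ ?_ (fun m hm x => le_trans (hqle x) (le_of_eq (hqM m hm).symm)) ?_
        · intro a ha b hb
          have h2 : ψ (a ⊓ b) ≤ ψ a := hψ_mono _ _ inf_le_left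
          have h3 := hψ_super a b
          exact le_antisymm (hpos _) (by simp only [hMdef, Set.mem_setOf_eq] at ha hb; linarith)
        · intro x hx
          have heq : q x = 0 :=
            le_antisymm (hqle x) (le_trans (le_of_eq (hqM w hw).symm) (hx w))
          rw [hq] at heq
          split_ifs at heq with h1 h2 h3
          · exact h1
          · exact absurd h3 (not_lt.mpr (hpos x))
          · exact absurd heq (by simp)
          · rw [show (0 : EReal) = ((0 : ℝ) : EReal) from rfl, EReal.coe_eq_coe_iff,
              div_eq_zero_iff] at heq
            exact heq.resolve_right h2
      · -- Case 4 : `ψ` is everywhere negative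
        push_neg at h0
        have hneg : ∀ x, ψ x < 0 := fun x => (hpos x).lt_of_ne (h0 x)
        by_cases hT : φ (⊤ : Submodule K V) = 0
        · -- all values of `q` are `⊥`
          have hall : ∀ x : Submodule K V, φ x = 0 := fun x =>
            le_antisymm (hT ▸ hφ_mono x ⊤ le_top) (hφ_nonneg x)
          have hqb : ∀ x, q x = ⊥ := by
            intro x
            rw [hq, if_neg (hneg x).ne, if_pos (hall x), if_neg (not_lt.mpr (hneg x).le)]
          refine finishP q Set.univ ⟨⊥, trivial⟩ (fun _ _ _ _ => trivial) ?_
            (fun x _ => trivial)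
          intro m _ x
          rw [hqb x, hqb m]
        · have hφtop : 0 < φ (⊤ : Submodule K V) := (hφ_nonneg ⊤).lt_of_ne (Ne.symm hT)
          obtain ⟨z, _, hφz, hz'⟩ := keyP φ ψ hφ_nonneg hφ_bot hφ_mono hψ_mono hφ_sub hψ_super H
            (finrank K (⊤ : Submodule K V)) ⊤ le_rfl hφtop
          have hz : ∀ x : Submodule K V, ψ x * φ z ≤ ψ z * φ x := fun x => hz' x le_top
          set M : Set (Submodule K V) := {x | 0 < φ x ∧ ψ x * φ z = ψ z * φ x} with hMdef
          have hzM : z ∈ M := ⟨hφz, by ring⟩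
          have hqM : ∀ m ∈ M, q m = ((ψ z / φ z : ℝ) : EReal) := by
            rintro m ⟨hφm, hm⟩
            rw [hq, if_neg (hneg m).ne, if_neg (ne_of_gt hφm)]
            congr 1
            rw [div_eq_div_iff hφm.ne' hφz.ne']
            linarith [hm]
          have hqle : ∀ x, q x ≤ ((ψ z / φ z : ℝ) : EReal) := by
            intro x
            rw [hq]
            split_ifs with h1 h2 h3
            · exact absurd h1 (hneg x).ne
            · exact absurd h3 (not_lt.mpr (hneg x).le)
            · exact bot_le
            · have hφx : 0 < φ x := (hφ_nonneg x).lt_of_ne (Ne.symm h2)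
              have : ψ x / φ x ≤ ψ z / φ z := by
                rw [div_le_div_iff₀ hφx hφz]
                exact hz x
              exact_mod_cast this
          refine finishP q M ⟨z, hzM⟩ ?_ (fun m hm x => le_trans (hqle x) (le_of_eq (hqM m hm).symm)) ?_
          · rintro a ⟨hφa, ha⟩ b ⟨hφb, hb⟩
            refine ⟨lt_of_lt_of_le hφa (hφ_mono a _ le_sup_left), ?_⟩
            refine le_antisymm (hz _) ?_
            have e1 : ψ a * φ z ≤ ψ (a ⊔ b) * φ z :=
              mul_le_mul_of_nonneg_right (hψ_mono a _ le_sup_left) hφz.le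
            have e2 : ψ z * φ (a ⊔ b) ≤ ψ z * φ a :=
              mul_le_mul_of_nonpos_left (hφ_mono a _ le_sup_left) (hneg z).le
            linarith
          · intro x hx
            have heq : q x = ((ψ z / φ z : ℝ) : EReal) :=
              le_antisymm (hqle x) (le_trans (le_of_eq (hqM z hzM).symm) (hx z))
            rw [hq] at heq
            split_ifs at heq with h1 h2 h3
            · exact absurd h1 (hneg x).ne
            · exact absurd h3 (not_lt.mpr (hneg x).le)
            · exact absurd heq (by simp)
            · have hφx : 0 < φ x := (hφ_nonneg x).lt_of_ne (Ne.symm h2)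
              rw [EReal.coe_eq_coe_iff, div_eq_div_iff hφx.ne' hφz.ne'] at heq
              exact ⟨hφx, by linarith⟩
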